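/- Every sofic group is hyperlinear. -/

import Mathlib

/-- Normalized Hamming distance on the symmetric group of a finite set. -/
noncomputable def hamDist {F : Type*} [Fintype F] (α β : Equiv.Perm F) : ℝ :=
  (Nat.card {f : F // α f ≠ β f} : ℝ) / (Fintype.card F : ℝ)

/-- A group is sofic if every finite subset admits `(K,ε)`-approximations into
finite symmetric groups with the normalized Hamming distance. -/
def IsSofic (G : Type*) [Group G] : Prop :=
  ∀ (K : Finset G) (ε : ℝ), 0 < ε →
    ∃ (F : Type) (_ : Fintype F) (_ : Nonempty F) (φ : G → Equiv.Perm F),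
      (∀ k₁ ∈ K, ∀ k₂ ∈ K, hamDist (φ (k₁ * k₂)) (φ k₁ * φ k₂) ≤ ε) ∧
      (∀ k₁ ∈ K, ∀ k₂ ∈ K, k₁ ≠ k₂ → 1 - ε ≤ hamDist (φ k₁) (φ k₂))

/-- Amenability via Følner sets: for every finite `S ⊆ G` and `ε > 0` there is a
nonempty finite `F ⊆ G` with `|F \ sF| < ε|F|` for all `s ∈ S`. -/
def IsAmenableFolner (G : Type*) [Group G] [DecidableEq G] : Prop :=
  ∀ (S : Finset G) (ε : ℝ), 0 < ε →
    ∃ F : Finset G, F.Nonempty ∧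
      ∀ s ∈ S, ((F \ F.image (s * ·)).card : ℝ) < ε * F.card

/-- Normalized Hilbert–Schmidt distance on `n × n` complex matrices. -/
noncomputable def dHS {n : ℕ} (u v : Matrix (Fin n) (Fin n) ℂ) : ℝ :=
  Real.sqrt ((1 / (n : ℝ)) * ∑ i, ∑ j, ‖u i j - v i j‖ ^ 2)

/-- A group is hyperlinear if every finite subset admits `(K,ε)`-approximations
into finite-dimensional unitary groups with the normalized Hilbert–Schmidt
distance. -/
def IsHyperlinear (G : Type*) [Group G] : Prop :=
  ∀ (K : Finset G) (ε : ℝ), 0 < ε →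
    ∃ n : ℕ, 0 < n ∧ ∃ θ : G → Matrix.unitaryGroup (Fin n) ℂ,
      (∀ k₁ ∈ K, ∀ k₂ ∈ K,
        dHS (θ (k₁ * k₂) : Matrix (Fin n) (Fin n) ℂ)
          ((θ k₁ * θ k₂ : Matrix.unitaryGroup (Fin n) ℂ) : Matrix (Fin n) (Fin n) ℂ) ≤ ε) ∧
      (∀ k₁ ∈ K, ∀ k₂ ∈ K, k₁ ≠ k₂ →
        Real.sqrt 2 - ε ≤
          dHS (θ k₁ : Matrix (Fin n) (Fin n) ℂ) (θ k₂ : Matrix (Fin n) (Fin n) ℂ))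

/-- The permutation matrix of `σ`, with `(i,j)` entry `1` iff `σ j = i`. -/
noncomputable def pMat {n : ℕ} (σ : Equiv.Perm (Fin n)) : Matrix (Fin n) (Fin n) ℂ :=
  Matrix.of fun i j => if σ j = i then 1 else 0

lemma pMat_mul {n : ℕ} (σ τ : Equiv.Perm (Fin n)) :
    pMat (σ * τ) = pMat σ * pMat τ := by
  ext i j
  simp only [pMat, Matrix.mul_apply, Matrix.of_apply, ite_mul, one_mul, zero_mul]
  have : ∀ x, (if σ x = i then if τ j = x then (1:ℂ) else 0 else 0)
      = if τ j = x then (if σ (τ j) = i then (1:ℂ) else 0) else 0 := by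
    intro x
    by_cases hx : τ j = x
    · subst hx; simp
    · simp [hx]
  rw [Finset.sum_congr rfl fun x _ => this x,
    Finset.sum_ite_eq Finset.univ (τ j) (fun _ => if σ (τ j) = i then (1:ℂ) else 0)]
  simp [Equiv.Perm.mul_apply]
  congr

lemma pMat_mem {n : ℕ} (σ : Equiv.Perm (Fin n)) :
    pMat σ ∈ Matrix.unitaryGroup (Fin n) ℂ := by
  rw [Matrix.mem_unitaryGroup_iff]
  ext i j
  simp only [pMat, Matrix.mul_apply, Matrix.star_apply, Matrix.of_apply]
  have : ∀ k, (if σ k = i then (1:ℂ) else 0) * star (if σ k = j then (1:ℂ) else 0)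
      = if σ k = i ∧ σ k = j then 1 else 0 := by
    intro k
    by_cases h1 : σ k = i <;> by_cases h2 : σ k = j <;> simp [h1, h2]
  rw [Finset.sum_congr rfl fun k _ => this k]
  by_cases h : i = j
  · subst h
    simp only [and_self]
    rw [Equiv.sum_comp σ (fun k => if k = i then (1:ℂ) else 0),
      Finset.sum_ite_eq' Finset.univ i (fun _ => (1:ℂ))]
    simp [Matrix.one_apply]
  · have : ∀ k, (if σ k = i ∧ σ k = j then (1:ℂ) else 0) = 0 := by
      intro k
      simp only [ite_eq_right_iff, and_imp]
      intro hi hj; exact absurd (hi ▸ hj) h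
    simp [this, Matrix.one_apply, h]

lemma hamDist_nonneg {F : Type*} [Fintype F] (α β : Equiv.Perm F) : 0 ≤ hamDist α β := by
  unfold hamDist; positivity

lemma dHS_pMat {n : ℕ} (hn : 0 < n) (σ τ : Equiv.Perm (Fin n)) :
    dHS (pMat σ) (pMat τ) = Real.sqrt (2 * hamDist σ τ) := by
  unfold dHS
  congr 1
  rw [Finset.sum_comm]
  have key : ∀ j, (∑ i, ‖pMat σ i j - pMat τ i j‖ ^ 2)
      = if σ j = τ j then (0:ℝ) else 2 := by
    intro j
    by_cases h : σ j = τ j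
    · simp [pMat, h]
    · rw [if_neg h]
      have : ∀ i, ‖pMat σ i j - pMat τ i j‖ ^ 2
          = (if σ j = i then (1:ℝ) else 0) + (if τ j = i then 1 else 0) := by
        intro i
        by_cases h1 : σ j = i <;> by_cases h2 : τ j = i <;>
          simp [pMat, h1, h2]
        · exact absurd (h1.trans h2.symm) h
      rw [Finset.sum_congr rfl fun i _ => this i, Finset.sum_add_distrib,
        Finset.sum_ite_eq Finset.univ (σ j) (fun _ => (1:ℝ)),
        Finset.sum_ite_eq Finset.univ (τ j) (fun _ => (1:ℝ))]
      norm_num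
  rw [Finset.sum_congr rfl fun j _ => key j]
  have hcard : Nat.card {f : Fin n // σ f ≠ τ f}
      = (Finset.univ.filter fun j => ¬ σ j = τ j).card := by
    rw [Nat.card_eq_fintype_card, Fintype.card_subtype]
  rw [Finset.sum_ite, Finset.sum_const, Finset.sum_const]
  unfold hamDist
  rw [hcard]
  rw [Fintype.card_fin]
  have hn' : (n:ℝ) ≠ 0 := by positivity
  field_simp
  ring

lemma permCongr_mul {F : Type*} {n : ℕ} (e : F ≃ Fin n) (α β : Equiv.Perm F) :
    e.permCongr (α * β) = e.permCongr α * e.permCongr β := by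
  ext i
  simp [Equiv.permCongr_apply, Equiv.Perm.mul_apply]

lemma hamDist_permCongr {F : Type*} [Fintype F] {n : ℕ} (hF : Fintype.card F = n)
    (e : F ≃ Fin n) (α β : Equiv.Perm F) :
    hamDist (e.permCongr α) (e.permCongr β) = hamDist α β := by
  unfold hamDist
  congr 2
  · exact Nat.card_congr
      ((Equiv.subtypeEquiv e.symm (fun i => by
        simp only [Equiv.permCongr_apply]
        exact (not_iff_not.mpr e.injective.eq_iff)) : _ ≃ _))
  · rw [Fintype.card_fin, hF]

/-- Every sofic group is hyperlinear. -/
theorem sofic_implies_hyperlinear {G : Type*} [Group G] (hG : IsSofic G) :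
    IsHyperlinear G := by
  intro K ε hε
  set δ : ℝ := min (ε ^ 2 / 2) (ε / 2) with hδdef
  have hδ : 0 < δ := lt_min (by positivity) (by positivity)
  obtain ⟨F, _, hne, φ, h1, h2⟩ := hG K δ hδ
  set n := Fintype.card F with hn
  have hnpos : 0 < n := Fintype.card_pos
  let e : F ≃ Fin n := Fintype.equivFin F
  let ψ : G → Equiv.Perm (Fin n) := fun g => e.permCongr (φ g)
  refine ⟨n, hnpos, fun g => ⟨pMat (ψ g), pMat_mem _⟩, ?_, ?_⟩
  · intro k₁ hk₁ k₂ hk₂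
    have hmul : ((⟨pMat (ψ k₁), pMat_mem _⟩ * ⟨pMat (ψ k₂), pMat_mem _⟩ :
        Matrix.unitaryGroup (Fin n) ℂ) : Matrix (Fin n) (Fin n) ℂ)
        = pMat (ψ k₁ * ψ k₂) := by
      rw [pMat_mul]; rfl
    rw [hmul]
    have : ψ k₁ * ψ k₂ = e.permCongr (φ k₁ * φ k₂) := (permCongr_mul e _ _).symm
    rw [this, dHS_pMat hnpos, hamDist_permCongr rfl]
    have hham := h1 k₁ hk₁ k₂ hk₂
    have hnn := hamDist_nonneg (φ (k₁ * k₂)) (φ k₁ * φ k₂)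
    calc Real.sqrt (2 * hamDist (φ (k₁ * k₂)) (φ k₁ * φ k₂))
        ≤ Real.sqrt (ε ^ 2) := by
          apply Real.sqrt_le_sqrt
          have : δ ≤ ε ^ 2 / 2 := min_le_left _ _
          linarith
      _ = ε := Real.sqrt_sq hε.le
  · intro k₁ hk₁ k₂ hk₂ hne'
    rw [dHS_pMat hnpos, hamDist_permCongr rfl]
    have hham := h2 k₁ hk₁ k₂ hk₂ hne'
    have hnn := hamDist_nonneg (φ k₁) (φ k₂)
    set h : ℝ := hamDist (φ k₁) (φ k₂)
    have hs : 0 ≤ Real.sqrt (2 * h) := Real.sqrt_nonneg _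
    have hsq : Real.sqrt (2 * h) ^ 2 = 2 * h := Real.sq_sqrt (by linarith)
    have hδε : δ ≤ ε ^ 2 / 2 := min_le_left _ _
    have key : Real.sqrt 2 ≤ Real.sqrt (2 * h) + ε := by
      have h2le : (2 : ℝ) ≤ (Real.sqrt (2 * h) + ε) ^ 2 := by
        nlinarith [hs, hε.le]
      calc Real.sqrt 2 ≤ Real.sqrt ((Real.sqrt (2 * h) + ε) ^ 2) :=
            Real.sqrt_le_sqrt h2le
        _ = Real.sqrt (2 * h) + ε := Real.sqrt_sq (by positivity)
    linarith
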